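/- Define f(K) := {E(W) : W ⊆ K} for K ⊆ 𝒫(T), and d(F) := {A ⊆ T : 𝒟_A ∈ F} for F ⊆ E. Then: (i) if K is a coherent SDS, f(K) is a proper principal filter on (E, ⊆), namely f(K) = {E' ∈ E : E(K) ⊆ E'}; (ii) if F is a proper principal filter on (E, ⊆), then d(F) is a coherent SDS; (iii) d(f(K)) = K for every coherent SDS K; (iv) f(d(F)) = F for every proper principal filter F on (E, ⊆); (v) K₁ ⊆ K₂ implies f(K₁) ⊆ f(K₂), and F₁ ⊆ F₂ implies d(F₁) ⊆ d(F₂). Hence f is an order isomorphism between the coherent SDSes ordered by inclusion and the proper principal filters on (E, ⊆) ordered by inclusion, with inverse d. -/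
import Mathlib


universe u

variable {T : Type u}

/-- `cl` is a closure operator on subsets of `T`. -/
def IsClosure (cl : Set T → Set T) : Prop :=
  (∀ A : Set T, A ⊆ cl A) ∧
  (∀ A B : Set T, A ⊆ B → cl A ⊆ cl B) ∧
  (∀ A : Set T, cl (cl A) = cl A)

/-- `cl` is finitary: the closure of a set is the union of the closures of its
finite subsets. -/
def IsFinitary (cl : Set T → Set T) : Prop :=
  ∀ A : Set T, cl A = ⋃ F ∈ {F : Set T | F.Finite ∧ F ⊆ A}, cl F

/-- A coherent set of desirable things (SDT): closed and avoiding the forbidden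
things `Tneg`. -/
def CohSDT (cl : Set T → Set T) (Tneg : Set T) (D : Set T) : Prop :=
  cl D = D ∧ D ∩ Tneg = ∅

/-- Selection maps of a collection `W` of sets of things: maps choosing an
element of each member of `W`. -/
def Sel (W : Set (Set T)) : Type u :=
  {σ : Set T → T // ∀ A ∈ W, σ A ∈ A}

/-- A coherent set of desirable sets of things (SDS): axioms K1–K5. -/
def CohSDS (cl : Set T → Set T) (Tneg : Set T) (K : Set (Set T)) : Prop :=
  (∅ : Set T) ∉ K ∧
  (∀ A₁ ∈ K, ∀ A₂ : Set T, A₁ ⊆ A₂ → A₂ ∈ K) ∧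
  (∀ A ∈ K, A \ Tneg ∈ K) ∧
  (∀ t ∈ cl (∅ : Set T), ({t} : Set T) ∈ K) ∧
  (∀ W ⊆ K, W.Nonempty →
    ∀ f : Sel W → T, (∀ σ : Sel W, f σ ∈ cl (σ.1 '' W)) → Set.range f ∈ K)

/-- A finitely coherent SDS: axioms K1–K4 together with K5 restricted to
nonempty finite subcollections. -/
def FinCohSDS (cl : Set T → Set T) (Tneg : Set T) (K : Set (Set T)) : Prop :=
  (∅ : Set T) ∉ K ∧
  (∀ A₁ ∈ K, ∀ A₂ : Set T, A₁ ⊆ A₂ → A₂ ∈ K) ∧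
  (∀ A ∈ K, A \ Tneg ∈ K) ∧
  (∀ t ∈ cl (∅ : Set T), ({t} : Set T) ∈ K) ∧
  (∀ W ⊆ K, W.Finite → W.Nonempty →
    ∀ f : Sel W → T, (∀ σ : Sel W, f σ ∈ cl (σ.1 '' W)) → Set.range f ∈ K)

/-- A finitely coherent set of desirable finite sets of things (SDFS):
axioms F1–F5. -/
def FinCohSDFS (cl : Set T → Set T) (Tneg : Set T) (K : Set (Set T)) : Prop :=
  (∀ F ∈ K, F.Finite) ∧
  (∅ : Set T) ∉ K ∧
  (∀ F₁ ∈ K, ∀ F₂ : Set T, F₂.Finite → F₁ ⊆ F₂ → F₂ ∈ K) ∧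
  (∀ F ∈ K, F \ Tneg ∈ K) ∧
  (∀ t ∈ cl (∅ : Set T), ({t} : Set T) ∈ K) ∧
  (∀ W ⊆ K, W.Finite → W.Nonempty →
    ∀ f : Sel W → T, (∀ σ : Sel W, f σ ∈ cl (σ.1 '' W)) → Set.range f ∈ K)

/-- The set of things whose singletons belong to `K`. -/
def sdt (K : Set (Set T)) : Set T := {t | ({t} : Set T) ∈ K}

/-- The SDS of all sets of things meeting `D`. -/
def sds (D : Set T) : Set (Set T) := {A | (A ∩ D).Nonempty}

/-- The SDFS of all finite sets of things meeting `D`. -/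
def sdfs (D : Set T) : Set (Set T) := {F | F.Finite ∧ (F ∩ D).Nonempty}

/-- The event `𝒟_A` of all coherent SDTs meeting `A`. -/
def evA (cl : Set T → Set T) (Tneg : Set T) (A : Set T) : Set (Set T) :=
  {D | CohSDT cl Tneg D ∧ (A ∩ D).Nonempty}

/-- The event `E(W)` of all coherent SDTs meeting every member of `W`
(with `E(∅)` equal to the set of all coherent SDTs). -/
def ev (cl : Set T → Set T) (Tneg : Set T) (W : Set (Set T)) : Set (Set T) :=
  {D | CohSDT cl Tneg D ∧ ∀ A ∈ W, (A ∩ D).Nonempty}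

/-- An SDS is conjunctive if every desirable set contains a desirable
singleton. -/
def Conjunctive (K : Set (Set T)) : Prop :=
  ∀ A ∈ K, ∃ t ∈ A, ({t} : Set T) ∈ K

/-- Completeness of an SDS. -/
def CompleteSDS (K : Set (Set T)) : Prop :=
  ∀ A₁ A₂ : Set T, A₁ ∪ A₂ ∈ K → A₁ ∈ K ∨ A₂ ∈ K

/-- The finitary part `K^f` of an SDS. -/
def finPart (K : Set (Set T)) : Set (Set T) :=
  {A | ∃ B ∈ K, B.Finite ∧ B ⊆ A}

/-- An SDS is finitary if every desirable set has a finite desirable subset. -/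
def FinitarySDS (K : Set (Set T)) : Prop :=
  ∀ A ∈ K, ∃ B, B.Finite ∧ B ⊆ A ∧ B ∈ K

/-- The lattice of events `E`. -/
def Ecal (cl : Set T → Set T) (Tneg : Set T) : Set (Set (Set T)) :=
  {E | ∃ W : Set (Set T), E = ev cl Tneg W}

/-- The lattice of finitary events `E_fin`. -/
def Efin (cl : Set T → Set T) (Tneg : Set T) : Set (Set (Set T)) :=
  {E | ∃ W : Set (Set T), W.Finite ∧ E = ev cl Tneg W}

/-- A filter on a lattice of events `L` ordered by inclusion. -/
def IsFilterOn (L F : Set (Set (Set T))) : Prop :=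
  F ⊆ L ∧ F.Nonempty ∧
  (∀ E₁ ∈ F, ∀ E₂ ∈ L, E₁ ⊆ E₂ → E₂ ∈ F) ∧
  (∀ E₁ ∈ F, ∀ E₂ ∈ F, E₁ ∩ E₂ ∈ F)

/-- A proper filter on `L`. -/
def IsProperFilterOn (L F : Set (Set (Set T))) : Prop :=
  IsFilterOn L F ∧ F ≠ L

/-- A prime filter on `L`. -/
def IsPrimeFilterOn (L F : Set (Set (Set T))) : Prop :=
  IsProperFilterOn L F ∧
  ∀ E₁ ∈ L, ∀ E₂ ∈ L, E₁ ∪ E₂ ∈ F → E₁ ∈ F ∨ E₂ ∈ F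

/-- A proper principal filter on `L`: the upset of some nonempty `E₀ ∈ L`. -/
def IsProperPrincipalFilterOn (L F : Set (Set (Set T))) : Prop :=
  ∃ E₀ ∈ L, E₀ ≠ (∅ : Set (Set T)) ∧ F = {E' | E' ∈ L ∧ E₀ ⊆ E'}

/-- The map `f̂` sending an SDS to the collection of events of its finite
subcollections. -/
def fhat (cl : Set T → Set T) (Tneg : Set T) (K : Set (Set T)) :
    Set (Set (Set T)) :=
  {E | ∃ W : Set (Set T), W ⊆ K ∧ W.Finite ∧ E = ev cl Tneg W}

/-- The map `f` sending an SDS to the collection of events of all of its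
subcollections. -/
def fprin (cl : Set T → Set T) (Tneg : Set T) (K : Set (Set T)) :
    Set (Set (Set T)) :=
  {E | ∃ W : Set (Set T), W ⊆ K ∧ E = ev cl Tneg W}

/-- The map `d` sending a collection of events to the SDS it determines. -/
def dmap (cl : Set T → Set T) (Tneg : Set T) (F : Set (Set (Set T))) :
    Set (Set T) :=
  {A : Set T | evA cl Tneg A ∈ F}

/-- `K` is finitely consistent: it is included in some finitely coherent SDS. -/
def FinConsistent (cl : Set T → Set T) (Tneg : Set T) (K : Set (Set T)) : Prop :=
  ∃ K' : Set (Set T), FinCohSDS cl Tneg K' ∧ K ⊆ K'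

/-- `K` is consistent: it is included in some coherent SDS. -/
def Consistent (cl : Set T → Set T) (Tneg : Set T) (K : Set (Set T)) : Prop :=
  ∃ K' : Set (Set T), CohSDS cl Tneg K' ∧ K ⊆ K'

/-- The finitary closure operator on SDSes (with value `𝒫(T)` when `K` is not
finitely consistent, via the empty-intersection convention). -/
def clFin (cl : Set T → Set T) (Tneg : Set T) (K : Set (Set T)) : Set (Set T) :=
  ⋂₀ {K' : Set (Set T) | FinCohSDS cl Tneg K' ∧ K ⊆ K'}

/-- The closure operator on SDSes (with value `𝒫(T)` when `K` is not
consistent, via the empty-intersection convention). -/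
def clSDS (cl : Set T → Set T) (Tneg : Set T) (K : Set (Set T)) : Set (Set T) :=
  ⋂₀ {K' : Set (Set T) | CohSDS cl Tneg K' ∧ K ⊆ K'}

section Aux

variable {T : Type u} [Nonempty T] {cl : Set T → Set T} {Tneg : Set T}

lemma ev_antitone {W W' : Set (Set T)} (h : W ⊆ W') :
    ev cl Tneg W' ⊆ ev cl Tneg W :=
  fun _ hD => ⟨hD.1, fun A hA => hD.2 A (h hA)⟩

lemma ev_singleton (A : Set T) : ev cl Tneg {A} = evA cl Tneg A := by
  ext D
  constructor
  · exact fun h => ⟨h.1, h.2 A rfl⟩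
  · rintro ⟨h1, h2⟩
    exact ⟨h1, fun B hB => by rwa [hB]⟩

lemma evA_mem_Ecal (A : Set T) : evA cl Tneg A ∈ Ecal cl Tneg :=
  ⟨{A}, (ev_singleton A).symm⟩

lemma ev_mem_Ecal (W : Set (Set T)) : ev cl Tneg W ∈ Ecal cl Tneg := ⟨W, rfl⟩

/-- Core lemma: if `A ∉ K` for a coherent SDS `K`, there is a coherent SDT
meeting every member of `K` but missing `A`. -/
lemma core_lemma (hcl : IsClosure cl) {K : Set (Set T)}
    (hK : CohSDS cl Tneg K) {A : Set T} (hA : A ∉ K) :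
    ∃ D ∈ ev cl Tneg K, A ∩ D = ∅ := by
  obtain ⟨hK1, hK2, hK3, hK4, hK5⟩ := hK
  rcases eq_or_ne K ∅ with hKe | hKne
  · -- K empty: then cl ∅ = ∅, take D = ∅
    have hcle : cl (∅ : Set T) = ∅ := by
      ext t
      constructor
      · intro ht
        exact absurd (hK4 t ht) (by simp [hKe])
      · intro ht; exact absurd ht (Set.notMem_empty t)
    refine ⟨∅, ⟨⟨hcle, by simp⟩, ?_⟩, by simp⟩
    intro B hB
    exact absurd hB (by simp [hKe])
  · -- K nonempty: find a selection with closure avoiding A ∪ Tneg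
    by_cases hσ : ∃ σ : Sel K, cl (σ.1 '' K) ∩ (A ∪ Tneg) = ∅
    · obtain ⟨σ, hσ⟩ := hσ
      refine ⟨cl (σ.1 '' K), ⟨⟨hcl.2.2 _, ?_⟩, ?_⟩, ?_⟩
      · apply Set.eq_empty_of_subset_empty
        intro t ⟨ht1, ht2⟩
        exact hσ ▸ (⟨ht1, Or.inr ht2⟩ : t ∈ cl (σ.1 '' K) ∩ (A ∪ Tneg))
      · intro B hB
        exact ⟨σ.1 B, σ.2 B hB, hcl.1 _ ⟨B, hB, rfl⟩⟩
      · apply Set.eq_empty_of_subset_empty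
        intro t ⟨ht1, ht2⟩
        exact hσ ▸ (⟨ht2, Or.inl ht1⟩ : t ∈ cl (σ.1 '' K) ∩ (A ∪ Tneg))
    · push_neg at hσ
      exfalso
      have hne : ∀ σ : Sel K, (cl (σ.1 '' K) ∩ (A ∪ Tneg)).Nonempty := by
        intro σ
        exact hσ σ
      set f : Sel K → T := fun σ => (hne σ).choose with hf
      have hfmem : ∀ σ : Sel K, f σ ∈ cl (σ.1 '' K) ∩ (A ∪ Tneg) :=
        fun σ => (hne σ).choose_spec
      have hrange : Set.range f ∈ K :=
        hK5 K (subset_refl K) (Set.nonempty_iff_ne_empty.2 hKne) f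
          (fun σ => (hfmem σ).1)
      have hsub : Set.range f ⊆ A ∪ Tneg := by
        rintro t ⟨σ, rfl⟩
        exact (hfmem σ).2
      have h1 : A ∪ Tneg ∈ K := hK2 _ hrange _ hsub
      have h2 : (A ∪ Tneg) \ Tneg ∈ K := hK3 _ h1
      exact hA (hK2 _ h2 A (fun t ht => ht.1.resolve_right ht.2))

lemma ev_nonempty (hcl : IsClosure cl) {K : Set (Set T)}
    (hK : CohSDS cl Tneg K) : (ev cl Tneg K).Nonempty := by
  obtain ⟨D, hD, -⟩ := core_lemma hcl hK hK.1
  exact ⟨D, hD⟩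

lemma mem_iff_ev_subset (hcl : IsClosure cl) {K : Set (Set T)}
    (hK : CohSDS cl Tneg K) (A : Set T) :
    A ∈ K ↔ ∀ D ∈ ev cl Tneg K, (A ∩ D).Nonempty := by
  constructor
  · intro hA D hD
    exact hD.2 A hA
  · intro h
    by_contra hA
    obtain ⟨D, hD, hDA⟩ := core_lemma hcl hK hA
    exact Set.not_nonempty_empty (hDA ▸ h D hD)

/-- The SDS determined by a nonempty set of coherent SDTs is coherent. -/
lemma sdsOf_coherent (hcl : IsClosure cl) {𝒟 : Set (Set T)}
    (hne : 𝒟.Nonempty) (h𝒟 : ∀ D ∈ 𝒟, CohSDT cl Tneg D) :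
    CohSDS cl Tneg {A : Set T | ∀ D ∈ 𝒟, (A ∩ D).Nonempty} := by
  refine ⟨?_, ?_, ?_, ?_, ?_⟩
  · intro h
    obtain ⟨D, hD⟩ := hne
    simpa using h D hD
  · intro A₁ h1 A₂ h12 D hD
    obtain ⟨t, ht1, ht2⟩ := h1 D hD
    exact ⟨t, h12 ht1, ht2⟩
  · intro A hA D hD
    obtain ⟨t, ht1, ht2⟩ := hA D hD
    refine ⟨t, ⟨ht1, ?_⟩, ht2⟩
    intro htn
    exact absurd ((h𝒟 D hD).2 ▸ (⟨ht2, htn⟩ : t ∈ D ∩ Tneg)) (Set.notMem_empty t)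
  · intro t ht D hD
    have : t ∈ D := (h𝒟 D hD).1 ▸ hcl.2.1 _ _ (Set.empty_subset D) ht
    exact ⟨t, rfl, this⟩
  · intro W hW hWne f hf D hD
    classical
    have hsel : ∀ A : Set T, A ∈ W → (A ∩ D).Nonempty := fun A hA => hW hA D hD
    set σ : Set T → T := fun A =>
      if h : (A ∩ D).Nonempty then h.choose else Classical.arbitrary T with hσdef
    have hσ : ∀ A ∈ W, σ A ∈ A := by
      intro A hA
      have h := hsel A hA
      simp only [hσdef, dif_pos h]
      exact h.choose_spec.1
    have hσD : ∀ A ∈ W, σ A ∈ D := by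
      intro A hA
      have h := hsel A hA
      simp only [hσdef, dif_pos h]
      exact h.choose_spec.2
    have himg : σ '' W ⊆ D := by
      rintro t ⟨B, hB, rfl⟩
      exact hσD B hB
    have hcls : cl (σ '' W) ⊆ D :=
      (h𝒟 D hD).1 ▸ hcl.2.1 _ _ himg
    exact ⟨f ⟨σ, hσ⟩, ⟨⟨σ, hσ⟩, rfl⟩, hcls (hf ⟨σ, hσ⟩)⟩

/-- Part (i): the filter characterisation of `fprin K`. -/
lemma fprin_eq (hcl : IsClosure cl) {K : Set (Set T)} (hK : CohSDS cl Tneg K) :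
    fprin cl Tneg K = {E | E ∈ Ecal cl Tneg ∧ ev cl Tneg K ⊆ E} := by
  ext E
  constructor
  · rintro ⟨W, hWK, rfl⟩
    exact ⟨⟨W, rfl⟩, ev_antitone hWK⟩
  · rintro ⟨⟨W, rfl⟩, hsub⟩
    refine ⟨W, ?_, rfl⟩
    intro A hA
    rw [mem_iff_ev_subset hcl hK]
    intro D hD
    exact (hsub hD).2 A hA

/-- `ev` of the SDS determined by a set of coherent SDTs of the form `ev W₀`
recovers that set. -/
lemma ev_sdsOf (hcl : IsClosure cl) (W₀ : Set (Set T)) :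
    ev cl Tneg {A : Set T | ∀ D ∈ ev cl Tneg W₀, (A ∩ D).Nonempty}
      = ev cl Tneg W₀ := by
  ext D
  constructor
  · rintro ⟨hDc, hall⟩
    refine ⟨hDc, fun A hA => hall A ?_⟩
    intro D' hD'
    exact hD'.2 A hA
  · rintro ⟨hDc, hall⟩
    exact ⟨hDc, fun A hA => hA D ⟨hDc, hall⟩⟩

end Aux

/-- Order isomorphism between the coherent SDSes and the proper principal
filters on `(E, ⊆)`. -/
theorem cohSDS_principal_filter_isomorphism (T : Type u) [Nonempty T]
    (cl : Set T → Set T) (Tneg : Set T)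
    (hcl : IsClosure cl) (hsan : cl (∅ : Set T) ∩ Tneg = ∅) :
    (∀ K : Set (Set T), CohSDS cl Tneg K →
      IsProperPrincipalFilterOn (Ecal cl Tneg) (fprin cl Tneg K) ∧
      fprin cl Tneg K = {E | E ∈ Ecal cl Tneg ∧ ev cl Tneg K ⊆ E}) ∧
    (∀ F : Set (Set (Set T)), IsProperPrincipalFilterOn (Ecal cl Tneg) F →
      CohSDS cl Tneg (dmap cl Tneg F)) ∧
    (∀ K : Set (Set T), CohSDS cl Tneg K →
      dmap cl Tneg (fprin cl Tneg K) = K) ∧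
    (∀ F : Set (Set (Set T)), IsProperPrincipalFilterOn (Ecal cl Tneg) F →
      fprin cl Tneg (dmap cl Tneg F) = F) ∧
    (∀ K₁ K₂ : Set (Set T), K₁ ⊆ K₂ → fprin cl Tneg K₁ ⊆ fprin cl Tneg K₂) ∧
    (∀ F₁ F₂ : Set (Set (Set T)), F₁ ⊆ F₂ →
      dmap cl Tneg F₁ ⊆ dmap cl Tneg F₂) := by
  -- dmap of a proper principal filter, described explicitly
  have hdmap_eq : ∀ F : Set (Set (Set T)),
      IsProperPrincipalFilterOn (Ecal cl Tneg) F →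
      ∃ W₀ : Set (Set T), (ev cl Tneg W₀).Nonempty ∧
        F = {E | E ∈ Ecal cl Tneg ∧ ev cl Tneg W₀ ⊆ E} ∧
        dmap cl Tneg F
          = {A : Set T | ∀ D ∈ ev cl Tneg W₀, (A ∩ D).Nonempty} := by
    rintro F ⟨E₀, ⟨W₀, rfl⟩, hne, rfl⟩
    refine ⟨W₀, Set.nonempty_iff_ne_empty.2 hne, rfl, ?_⟩
    ext A
    constructor
    · rintro ⟨-, hsub⟩ D hD
      exact (hsub hD).2
    · intro h
      refine ⟨evA_mem_Ecal A, ?_⟩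
      intro D hD
      exact ⟨hD.1, h D hD⟩
  have part1 : ∀ K : Set (Set T), CohSDS cl Tneg K →
      IsProperPrincipalFilterOn (Ecal cl Tneg) (fprin cl Tneg K) ∧
      fprin cl Tneg K = {E | E ∈ Ecal cl Tneg ∧ ev cl Tneg K ⊆ E} := by
    intro K hK
    have heq := fprin_eq hcl hK
    refine ⟨⟨ev cl Tneg K, ev_mem_Ecal K, ?_, heq⟩, heq⟩
    exact Set.nonempty_iff_ne_empty.1 (ev_nonempty hcl hK)
  have part2 : ∀ F : Set (Set (Set T)),
      IsProperPrincipalFilterOn (Ecal cl Tneg) F →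
      CohSDS cl Tneg (dmap cl Tneg F) := by
    intro F hF
    obtain ⟨W₀, hne, -, hd⟩ := hdmap_eq F hF
    rw [hd]
    exact sdsOf_coherent hcl hne (fun D hD => hD.1)
  refine ⟨part1, part2, ?_, ?_, ?_, ?_⟩
  · -- d ∘ f = id
    intro K hK
    ext A
    rw [dmap, Set.mem_setOf_eq, (part1 K hK).2, Set.mem_setOf_eq,
      mem_iff_ev_subset hcl hK]
    constructor
    · rintro ⟨-, hsub⟩ D hD
      exact (hsub hD).2
    · intro h
      exact ⟨evA_mem_Ecal A, fun D hD => ⟨hD.1, h D hD⟩⟩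
  · -- f ∘ d = id
    intro F hF
    obtain ⟨W₀, hne, hFeq, hd⟩ := hdmap_eq F hF
    have hcoh := part2 F hF
    rw [(part1 _ hcoh).2, hd, ev_sdsOf hcl W₀, ← hFeq]
  · -- monotonicity of fprin
    rintro K₁ K₂ h E ⟨W, hW, rfl⟩
    exact ⟨W, hW.trans h, rfl⟩
  · -- monotonicity of dmap
    intro F₁ F₂ h A hA
    exact h hA
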